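/- Every multi vector space V over a finite-dimensional vector space X admits an M-basis, i.e., a basis B of X such that for any finitely many distinct elements x₁,...,x_r of B and nonzero scalars a₁,...,a_r, C_V(∑ a_i x_i) = min_i C_V(x_i). -/

import Mathlib

open Submodule Set

/-- every multi vector space over a finite-dimensional space has an M-basis. -/
theorem mvs_exists_Mbasis
    {K X : Type*} [Field K] [AddCommGroup X] [Module K X] [FiniteDimensional K X]
    (C : X → ℕ) (ω : ℕ) (hb : ∀ x, C x ≤ ω)
    (hadd : ∀ x y : X, min (C x) (C y) ≤ C (x + y))
    (hsmul : ∀ (a : K) (x : X), C x ≤ C (a • x)) :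
    ∃ b : Module.Basis (Fin (Module.finrank K X)) K X,
      ∀ (s : Finset (Fin (Module.finrank K X))) (hs : s.Nonempty)
        (a : Fin (Module.finrank K X) → K), (∀ i ∈ s, a i ≠ 0) →
        C (∑ i ∈ s, a i • b i) = s.inf' hs (fun i => C (b i)) := by
  classical
  have hCsmul : ∀ (a : K) (x : X), a ≠ 0 → C (a • x) = C x := by
    intro a x ha
    refine le_antisymm ?_ (hsmul a x)
    have := hsmul a⁻¹ (a • x)
    rwa [smul_smul, inv_mul_cancel₀ ha, one_smul] at this
  let V : ℕ → Submodule K X := fun k =>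
    { carrier := {x | k ≤ C x ∨ x = 0}
      add_mem' := by
        rintro x y (hx | rfl) (hy | rfl)
        · rcases eq_or_ne (x + y) 0 with h | h
          · exact Or.inr h
          · exact Or.inl ((le_min hx hy).trans (hadd x y))
        · simpa using Or.inl hx
        · simpa using Or.inl hy
        · simp
      zero_mem' := Or.inr rfl
      smul_mem' := by
        rintro a x (hx | rfl)
        · exact Or.inl (hx.trans (hsmul a x))
        · simp }
  have hVmem : ∀ k x, x ∈ V k ↔ (k ≤ C x ∨ x = 0) := fun _ _ => Iff.rfl
  have hVtop : V 0 = ⊤ := by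
    ext x; simp [hVmem]
  have hVbot : ∀ k, ω + 1 ≤ k → V k = ⊥ := by
    intro k hk
    ext x
    simp only [hVmem, Submodule.mem_bot]
    constructor
    · rintro (h | rfl)
      · exact absurd (h.trans (hb x)) (by omega)
      · rfl
    · rintro rfl; exact Or.inr rfl
  have hVmono : ∀ {j k : ℕ}, j ≤ k → V k ≤ V j := by
    intro j k hjk x hx
    rcases hx with h | rfl
    · exact Or.inl (hjk.trans h)
    · exact Or.inr rfl
  -- flag-adapted independent sets, by downward induction
  have key : ∀ j : ℕ, ∃ s : Set X, LinearIndependent K ((↑) : s → X) ∧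
      ∀ k, span K (s ∩ (V k : Set X)) = V (max (ω + 1 - j) k) := by
    intro j
    induction j with
    | zero =>
      refine ⟨∅, linearIndependent_empty K X, fun k => ?_⟩
      rw [Set.empty_inter, span_empty, hVbot _ (by omega)]
    | succ j ih =>
      obtain ⟨s, hli, hspan⟩ := ih
      have hli' : LinearIndepOn K id s := hli
      by_cases hj : ω + 1 ≤ j
      · refine ⟨s, hli, fun k => ?_⟩
        rw [hspan k]
        congr 1
        omega
      · set n := ω + 1 - (j + 1) with hn
        have hEq : ω + 1 - j = n + 1 := by omega
        rw [hEq] at hspan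
        have hs_sub : s ⊆ (V (n + 1) : Set X) := by
          intro x hx
          have hx0 : x ∈ span K (s ∩ (V 0 : Set X)) :=
            subset_span ⟨hx, by rw [hVtop]; trivial⟩
          rw [hspan 0] at hx0
          simpa using hx0
        have hs_sub_n : s ⊆ (V n : Set X) :=
          fun x hx => hVmono (Nat.le_succ n) (hs_sub hx)
        refine ⟨hli'.extend hs_sub_n, hli'.linearIndepOn_extend hs_sub_n, fun k => ?_⟩
        have hbsub : hli'.extend hs_sub_n ⊆ (V n : Set X) := hli'.extend_subset hs_sub_n
        have hsb : s ⊆ hli'.extend hs_sub_n := hli'.subset_extend hs_sub_n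
        have hspanb : span K (hli'.extend hs_sub_n) = V n := by
          apply le_antisymm
          · rw [span_le]; exact hbsub
          · intro x hx; exact hli'.subset_span_extend hs_sub_n hx
        apply le_antisymm
        · rw [span_le]
          rintro x ⟨hxb, hxk⟩
          have hxn : x ∈ V n := hbsub hxb
          rcases hxn with h1 | rfl
          · rcases hxk with h2 | rfl
            · exact Or.inl (max_le h1 h2)
            · exact Or.inr rfl
          · exact Or.inr rfl
        · rcases le_or_gt k n with hkn | hnk
          · rw [max_eq_left hkn]
            have hbk : hli'.extend hs_sub_n ∩ (V k : Set X) = hli'.extend hs_sub_n :=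
              Set.inter_eq_self_of_subset_left
                (hbsub.trans (SetLike.coe_subset_coe.mpr (hVmono hkn)))
            rw [hbk, hspanb]
          · have : V (max n k) = span K (s ∩ (V k : Set X)) := by
              rw [hspan k, max_eq_right hnk.le, max_eq_right hnk]
            rw [this]
            exact span_mono (Set.inter_subset_inter_left _ hsb)
  obtain ⟨s, hli, hspan⟩ := key (ω + 1)
  have hspan' : ∀ k, span K (s ∩ (V k : Set X)) = V k := by
    intro k
    rw [hspan k]
    congr 1
    omega
  have hstop : span K s = ⊤ := by
    have h0 := hspan' 0
    rw [hVtop] at h0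
    simpa using h0
  -- build the basis
  let b0 : Module.Basis s K X := Module.Basis.mk hli (by rw [Subtype.range_coe]; exact hstop.ge)
  let e : s ≃ Fin (Module.finrank K X) := b0.indexEquiv (Module.finBasis K X)
  let b : Module.Basis (Fin (Module.finrank K X)) K X := b0.reindex e
  have hrange : Set.range b = s := by
    rw [show b = b0.reindex e from rfl, Module.Basis.range_reindex]
    rw [show ⇑b0 = ((↑) : s → X) from Module.Basis.coe_mk _ _, Subtype.range_coe]
  refine ⟨b, fun t ht a ha => ?_⟩
  obtain ⟨j, hjt, hjm⟩ := t.exists_mem_eq_inf' ht (fun i => C (b i))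
  -- lower bound: C of a sum is at least the min
  have hgen : ∀ (u : Finset (Fin (Module.finrank K X))) (hu : u.Nonempty)
      (f : Fin (Module.finrank K X) → X),
      u.inf' hu (fun i => C (f i)) ≤ C (∑ i ∈ u, f i) := by
    intro u hu f
    induction hu using Finset.Nonempty.cons_induction with
    | singleton i => simp
    | cons i u hiu hune ih =>
      rw [Finset.sum_cons, Finset.inf'_cons hune]
      calc min (C (f i)) (u.inf' hune fun j => C (f j))
          ≤ min (C (f i)) (C (∑ j ∈ u, f j)) := min_le_min le_rfl ih
        _ ≤ C (f i + ∑ j ∈ u, f j) := hadd _ _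
  have hge : t.inf' ht (fun i => C (b i)) ≤ C (∑ i ∈ t, a i • b i) := by
    have h1 := hgen t ht (fun i => a i • b i)
    have h2 : t.inf' ht (fun i => C (b i)) = t.inf' ht (fun i => C (a i • b i)) :=
      Finset.inf'_congr ht rfl (fun i hi => (hCsmul (a i) (b i) (ha i hi)).symm)
    rw [h2]; exact h1
  -- upper bound
  refine le_antisymm ?_ hge
  by_contra hcon
  push_neg at hcon
  set m := t.inf' ht (fun i => C (b i)) with hm
  have hxm : (∑ i ∈ t, a i • b i) ∈ V (m + 1) := Or.inl hcon
  rw [← hspan' (m + 1)] at hxm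
  have himg : s ∩ ((V (m + 1) : Submodule K X) : Set X) ⊆
      ⇑b '' {i | b i ∈ V (m + 1)} := by
    rintro x ⟨hxs, hxV⟩
    obtain ⟨i, rfl⟩ := hrange ▸ hxs
    exact ⟨i, hxV, rfl⟩
  have hxspan : (∑ i ∈ t, a i • b i) ∈ span K (⇑b '' {i | b i ∈ V (m + 1)}) :=
    span_mono himg hxm
  rw [Module.Basis.mem_span_image] at hxspan
  have hreprj : b.repr (∑ i ∈ t, a i • b i) j = a j := by
    rw [map_sum]
    simp only [map_smul, Module.Basis.repr_self]
    rw [Finset.sum_apply']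
    simp only [Finsupp.smul_single, smul_eq_mul, mul_one, Finsupp.single_apply]
    rw [Finset.sum_ite_eq' t j a, if_pos hjt]
  have hjsupp : j ∈ (b.repr (∑ i ∈ t, a i • b i)).support := by
    rw [Finsupp.mem_support_iff, hreprj]
    exact ha j hjt
  have hbjV : b j ∈ V (m + 1) := hxspan hjsupp
  rcases hbjV with h | h
  · rw [← hjm] at h; omega
  · exact b.ne_zero j h
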